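/- Let n ≥ k ≥ 0 be integers with k ≤ n−1, let F be a pointwise-increasing family of k-element subsets of [n], and let x, y ∈ [n] with x < y. Then, after standardisation, F_x^- ⊇ F_y^- as families of k-subsets of [n−1]. -/

import Mathlib

/-- The board `[n] = {1, …, n}` as a finite set of natural numbers. -/
def board (n : ℕ) : Finset ℕ := Finset.Icc 1 n

/-- The order-preserving relabelling of `[n] \ {x}` onto `[n-1]`:
elements below `x` are unchanged, elements above `x` drop by one. -/
def stdElt (x r : ℕ) : ℕ := if r < x then r else r - 1

/-- Standardise a set avoiding `x`: relabel it via `stdElt x`. -/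
def stdSet (x : ℕ) (S : Finset ℕ) : Finset ℕ := S.image (stdElt x)

/-- The standardised section `F_x^+ = { S \ {x} : x ∈ S ∈ F }`,
viewed as a family of subsets of `[n-1]`. -/
def secPlus (F : Set (Finset ℕ)) (x : ℕ) : Set (Finset ℕ) :=
  {T | ∃ S ∈ F, x ∈ S ∧ T = stdSet x (S.erase x)}

/-- The standardised section `F_x^- = { S ∈ F : x ∉ S }`,
viewed as a family of subsets of `[n-1]`. -/
def secMinus (F : Set (Finset ℕ)) (x : ℕ) : Set (Finset ℕ) :=
  {T | ∃ S ∈ F, x ∉ S ∧ T = stdSet x S}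

mutual
  /-- `AliceWins n k F`: Alice wins her `F`-game, where `F` is a family of
  `k`-subsets of `[n]`.  Terminal games (`k = 0` or `k = n`) are won iff `F`
  is nonempty; otherwise Alice needs a first offer `x` such that Bob wins both
  his `F_x^+`-game and his `F_x^-`-game. -/
  def AliceWins (n k : ℕ) (F : Set (Finset ℕ)) : Prop :=
    if h : k = 0 ∨ n ≤ k then F.Nonempty
    else ∃ x ∈ board n,
      BobWins (n - 1) (k - 1) (secPlus F x) ∧ BobWins (n - 1) k (secMinus F x)
  termination_by n
  decreasing_by all_goals omega

  /-- `BobWins n k F`: Bob wins his `F`-game, where `F` is a family of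
  `k`-subsets of `[n]`.  Terminal games (`k = 0` or `k = n`) are won iff `F`
  is nonempty; otherwise Bob needs, for every first offer `x`, that Alice wins
  her `F_x^+`-game or her `F_x^-`-game. -/
  def BobWins (n k : ℕ) (F : Set (Finset ℕ)) : Prop :=
    if h : k = 0 ∨ n ≤ k then F.Nonempty
    else ∀ x ∈ board n,
      AliceWins (n - 1) (k - 1) (secPlus F x) ∨ AliceWins (n - 1) k (secMinus F x)
  termination_by n
  decreasing_by all_goals omega
end

/-- `S ⪯ T` in the pointwise order: the increasing enumerations of `S` and `T`
have the same length and are pointwise `≤`. -/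
def PointwiseLE (S T : Finset ℕ) : Prop :=
  List.Forall₂ (· ≤ ·) (S.sort (· ≤ ·)) (T.sort (· ≤ ·))

/-- `F` consists of `k`-element subsets of `[n]`. -/
def IsFamilyOn (n k : ℕ) (F : Set (Finset ℕ)) : Prop :=
  ∀ S ∈ F, S ⊆ board n ∧ S.card = k

/-- `F` is pointwise-increasing as a family of `k`-subsets of `[n]`:
it is upwards closed in the pointwise order. -/
def IsIncreasingFamily (n k : ℕ) (F : Set (Finset ℕ)) : Prop :=
  ∀ S T : Finset ℕ, S ∈ F → T ⊆ board n → T.card = k → PointwiseLE S T → T ∈ F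

/-- Sorting the image under a map that is strictly monotone on the set
commutes with mapping over the sorted list. -/
lemma sort_image_of_strictMonoOn {φ : ℕ → ℕ} {S : Finset ℕ}
    (hmono : ∀ a ∈ S, ∀ b ∈ S, a < b → φ a < φ b) :
    (S.image φ).sort (· ≤ ·) = (S.sort (· ≤ ·)).map φ := by
  have hinj : Set.InjOn φ ↑S := fun a ha b hb hab => by
    by_contra h
    rcases lt_or_gt_of_ne h with h' | h'
    · exact absurd hab (hmono a ha b hb h').ne
    · exact absurd hab.symm (hmono b hb a ha h').ne
  have hperm : ((S.image φ).sort (· ≤ ·)).Perm ((S.sort (· ≤ ·)).map φ) := by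
    apply Multiset.coe_eq_coe.mp
    show ((S.image φ).sort (· ≤ ·) : Multiset ℕ) = ((S.sort (· ≤ ·)).map φ : Multiset ℕ)
    rw [← Multiset.map_coe, Finset.sort_eq, Finset.sort_eq, Finset.image_val_of_injOn hinj]
  refine List.Perm.eq_of_pairwise' (Finset.pairwise_sort _ _) ?_ hperm
  have := (Finset.sortedLT_sort S).pairwise
  rw [List.pairwise_map]
  refine this.imp_of_mem fun {a b} ha hb hab => ?_
  have ha' := (Finset.mem_sort (α := ℕ) (· ≤ ·)).1 ha
  have hb' := (Finset.mem_sort (α := ℕ) (· ≤ ·)).1 hb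
  exact (hmono a ha' b hb' hab).le

/-- for an increasing family, the standardised `-`-sections
decrease with the sectioning element: `F_x^- ⊇ F_y^-` for `x < y`. -/
theorem secMinus_antimono (n k : ℕ) (hkn : k ≤ n - 1) (F : Set (Finset ℕ))
    (hF : IsFamilyOn n k F) (hinc : IsIncreasingFamily n k F)
    (x y : ℕ) (hx : x ∈ board n) (hy : y ∈ board n) (hxy : x < y) :
    secMinus F y ⊆ secMinus F x := by
  rintro T ⟨S, hS, hyS, rfl⟩
  simp only [board, Finset.mem_Icc] at hx hy
  obtain ⟨hSn, hSk⟩ := hF S hS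
  set φ : ℕ → ℕ := fun s => if x ≤ s ∧ s < y then s + 1 else s with hφ
  have hSne : ∀ s ∈ S, s ≠ y := fun s hs h => hyS (h ▸ hs)
  have hSbd : ∀ s ∈ S, 1 ≤ s ∧ s ≤ n := by
    intro s hs
    have := hSn hs
    simpa [board, Finset.mem_Icc] using this
  have hmono : ∀ a ∈ S, ∀ b ∈ S, a < b → φ a < φ b := by
    intro a ha b hb hab
    have := hSne a ha
    have := hSne b hb
    simp only [hφ]
    split_ifs <;> omega
  have hle : ∀ s, s ≤ φ s := by intro s; simp only [hφ]; split_ifs <;> omega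
  refine ⟨S.image φ, ?_, ?_, ?_⟩
  · -- S.image φ ∈ F
    apply hinc S _ hS
    · intro t ht
      simp only [Finset.mem_image] at ht
      obtain ⟨s, hs, rfl⟩ := ht
      have := hSbd s hs
      simp only [board, Finset.mem_Icc, hφ]
      split_ifs <;> omega
    · rw [Finset.card_image_of_injOn, hSk]
      intro a ha b hb hab
      by_contra h
      rcases lt_or_gt_of_ne h with h' | h'
      · exact absurd hab (hmono a ha b hb h').ne
      · exact absurd hab.symm (hmono b hb a ha h').ne
    · unfold PointwiseLE
      rw [sort_image_of_strictMonoOn hmono]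
      rw [List.forall₂_map_right_iff]
      exact List.forall₂_same.2 fun s _ => hle s
  · -- x ∉ S.image φ
    simp only [Finset.mem_image, not_exists]
    rintro s ⟨hs, hsx⟩
    have := hSne s hs
    simp only [hφ] at hsx
    split_ifs at hsx <;> omega
  · -- stdSet x (S.image φ) = stdSet y S
    unfold stdSet
    rw [Finset.image_image]
    apply Finset.image_congr
    intro s hs
    have hsy := hSne s hs
    simp only [Function.comp, stdElt, hφ]
    split_ifs <;> omega
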